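/- Let n ≥ 1 and let B > 0 be a real number. Let 𝒜 be a finite set of tuples a = (a₀,…,aₙ) ∈ ℤ^{n+1} such that each a has gcd(a₀,…,aₙ) = 1 and max_i |aᵢ| ≤ B, and such that no two distinct elements of 𝒜 are proportional over ℚ (so distinct elements of 𝒜 represent distinct points of ℙⁿ(ℚ)). Let J be a finite set of rational primes, and for each p ∈ J let g_p ≥ 1 be a real number such that the number of equivalence classes of 𝒜 under the relation 'a ∼_p b iff p divides aᵢb_j − a_jbᵢ for all indices i, j' is at most g_p. Then |𝒜| ≤ (∑_{p ∈ J} log p − log(2B²)) / (∑_{p ∈ J} (log p)/g_p − log(2B²)), provided the denominator ∑_{p ∈ J} (log p)/g_p − log(2B²) is positive. -/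

import Mathlib

lemma aux_trans {n : ℕ} (p : ℕ) (hp : p.Prime) (a b r : Fin (n + 1) → ℤ)
    (hr : Finset.univ.gcd r = 1)
    (ha : ∀ i j, (p : ℤ) ∣ a i * r j - a j * r i)
    (hb : ∀ i j, (p : ℤ) ∣ b i * r j - b j * r i) :
    ∀ i j, (p : ℤ) ∣ a i * b j - a j * b i := by
  haveI : Fact p.Prime := ⟨hp⟩
  obtain ⟨k, hk⟩ : ∃ k, ¬ (p : ℤ) ∣ r k := by
    by_contra h
    push_neg at h
    have : (p : ℤ) ∣ Finset.univ.gcd r := Finset.dvd_gcd fun i _ => h i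
    rw [hr] at this
    have := Int.le_of_dvd one_pos this
    have := hp.two_le
    omega
  have hrk : ((r k : ℤ) : ZMod p) ≠ 0 := by
    rwa [Ne, ZMod.intCast_zmod_eq_zero_iff_dvd]
  intro i j
  rw [← ZMod.intCast_zmod_eq_zero_iff_dvd]
  push_cast
  rw [sub_eq_zero]
  have ha' : ∀ i j : Fin (n+1), ((a i : ZMod p)) * r j = a j * r i := by
    intro i j
    have := (ZMod.intCast_zmod_eq_zero_iff_dvd _ p).2 (ha i j)
    push_cast at this
    exact sub_eq_zero.mp this
  have hb' : ∀ i j : Fin (n+1), ((b i : ZMod p)) * r j = b j * r i := by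
    intro i j
    have := (ZMod.intCast_zmod_eq_zero_iff_dvd _ p).2 (hb i j)
    push_cast at this
    exact sub_eq_zero.mp this
  have key : ((a i : ZMod p) * b j) * (r k * r k) = (a j * b i) * (r k * r k) := by
    calc ((a i : ZMod p) * b j) * (r k * r k) = (a i * r k) * (b j * r k) := by ring
    _ = (a k * r i) * (b k * r j) := by rw [ha' i k, hb' j k]
    _ = (a j * r k) * (b i * r k) := by rw [ha' j k, hb' i k]; ring
    _ = (a j * b i) * (r k * r k) := by ring
  exact mul_right_cancel₀ (mul_ne_zero hrk hrk) key

lemma aux_logsum (J : Finset ℕ) (hJ : ∀ p ∈ J, p.Prime) (m : ℤ) (hm : m ≠ 0)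
    (hdvd : ∀ p ∈ J, (p : ℤ) ∣ m) :
    ∑ p ∈ J, Real.log p ≤ Real.log (m.natAbs) := by
  have hprod : (∏ p ∈ J, p) ∣ m.natAbs :=
    Finset.prod_primes_dvd _ (fun p hp => (hJ p hp).prime)
      (fun p hp => Int.natCast_dvd.mp (hdvd p hp))
  have hpos : 0 < m.natAbs := Int.natAbs_pos.mpr hm
  have hle : (∏ p ∈ J, p) ≤ m.natAbs := Nat.le_of_dvd hpos hprod
  have h1 : ∑ p ∈ J, Real.log p = Real.log (∏ p ∈ J, (p : ℝ)) :=
    (Real.log_prod (s := J) (f := fun p : ℕ => (p : ℝ)) (fun p hp => by exact_mod_cast (hJ p hp).pos.ne')).symm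
  rw [h1]
  apply Real.log_le_log (Finset.prod_pos fun p hp => by exact_mod_cast (hJ p hp).pos)
  have := (Nat.cast_le (α := ℝ)).mpr hle
  rwa [Nat.cast_prod] at this

theorem stmt_7 (n : ℕ) (hn : 1 ≤ n) (B : ℝ) (hB : 0 < B)
    (𝒜 : Finset (Fin (n + 1) → ℤ))
    (hprim : ∀ a ∈ 𝒜, Finset.univ.gcd a = 1)
    (hbound : ∀ a ∈ 𝒜, ∀ i, (|a i| : ℝ) ≤ B)
    (hdist : ∀ a ∈ 𝒜, ∀ b ∈ 𝒜, (∃ q : ℚ, ∀ i, (b i : ℚ) = q * (a i : ℚ)) → a = b)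
    (J : Finset ℕ) (hJ : ∀ p ∈ J, p.Prime)
    (g : ℕ → ℝ) (hg1 : ∀ p ∈ J, 1 ≤ g p)
    (hclasses : ∀ p ∈ J, ∃ R : Finset (Fin (n + 1) → ℤ), R ⊆ 𝒜 ∧ (R.card : ℝ) ≤ g p ∧
      ∀ a ∈ 𝒜, ∃ r ∈ R, ∀ i j, (p : ℤ) ∣ (a i * r j - a j * r i))
    (hden : 0 < (∑ p ∈ J, Real.log p / g p) - Real.log (2 * B ^ 2)) :
    (𝒜.card : ℝ) ≤ ((∑ p ∈ J, Real.log p) - Real.log (2 * B ^ 2)) /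
      ((∑ p ∈ J, Real.log p / g p) - Real.log (2 * B ^ 2)) := by
  classical
  set L := Real.log (2 * B ^ 2) with hLdef
  set S1 := ∑ p ∈ J, Real.log p with hS1
  set S2 := ∑ p ∈ J, Real.log p / g p with hS2
  have hlogp : ∀ p ∈ J, 0 ≤ Real.log p := fun p hp =>
    Real.log_nonneg (by exact_mod_cast (hJ p hp).one_le)
  have hgpos : ∀ p ∈ J, 0 < g p := fun p hp => lt_of_lt_of_le one_pos (hg1 p hp)
  have hS2S1 : S2 ≤ S1 :=
    Finset.sum_le_sum fun p hp => div_le_self (hlogp p hp) (hg1 p hp)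
  rcases Finset.eq_empty_or_nonempty 𝒜 with h𝒜 | ⟨a₀, ha₀⟩
  · rw [h𝒜]
    simp only [Finset.card_empty, Nat.cast_zero]
    exact div_nonneg (le_trans hden.le (by linarith)) hden.le
  -- 𝒜 is nonempty
  have hNZ : ∀ a ∈ 𝒜, ∃ i, a i ≠ 0 := by
    intro a ha
    by_contra h
    push_neg at h
    have := hprim a ha
    rw [Finset.gcd_eq_zero_iff.mpr (fun i _ => h i)] at this
    exact zero_ne_one this
  have hB1 : (1 : ℝ) ≤ B := by
    obtain ⟨i, hi⟩ := hNZ a₀ ha₀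
    have h1 : (1 : ℤ) ≤ |a₀ i| := Int.one_le_abs (by omega)
    calc (1 : ℝ) ≤ |(a₀ i : ℝ)| := by
          rw [← Int.cast_abs]; exact_mod_cast h1
    _ ≤ B := hbound a₀ ha₀ i
  have hL0 : 0 < L := Real.log_pos (by nlinarith)
  set N := 𝒜.card with hNdef
  have hN1 : 1 ≤ N := Finset.card_pos.mpr ⟨a₀, ha₀⟩
  have hNpos : (0 : ℝ) < N := by exact_mod_cast hN1
  -- nonzero minor for distinct points, bounded by 2B²
  have hminor : ∀ a ∈ 𝒜, ∀ b ∈ 𝒜, a ≠ b → ∃ i j, a i * b j - a j * b i ≠ 0 := by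
    intro a ha b hb hab
    by_contra h
    push_neg at h
    have heq : ∀ i j, a i * b j = a j * b i := fun i j => sub_eq_zero.mp (h i j)
    obtain ⟨i, hi⟩ := hNZ a ha
    apply hab
    apply hdist a ha b hb
    refine ⟨(b i : ℚ) / (a i : ℚ), fun j => ?_⟩
    have hai : (a i : ℚ) ≠ 0 := Int.cast_ne_zero.mpr hi
    rw [div_mul_eq_mul_div, eq_div_iff hai]
    exact_mod_cast (by linear_combination heq i j : b j * a i = b i * a j)
  -- the counting quantity
  set pairs : ℕ → Finset ((Fin (n+1) → ℤ) × (Fin (n+1) → ℤ)) := fun p =>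
    (𝒜 ×ˢ 𝒜).filter fun ab => ∀ i j, (p : ℤ) ∣ ab.1 i * ab.2 j - ab.1 j * ab.2 i
    with hpairs
  set T := ∑ p ∈ J, Real.log p * ((pairs p).card : ℝ) with hT
  -- lower bound for T
  have hlow : (N : ℝ) ^ 2 * S2 ≤ T := by
    rw [hS2, hT, Finset.mul_sum]
    refine Finset.sum_le_sum fun p hp => ?_
    obtain ⟨R, hR𝒜, hRcard, hrep⟩ := hclasses p hp
    have hrep' : ∀ a : Fin (n+1) → ℤ, ∃ r, a ∈ 𝒜 → r ∈ R ∧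
        ∀ i j, (p : ℤ) ∣ a i * r j - a j * r i := by
      intro a
      by_cases ha : a ∈ 𝒜
      · obtain ⟨r, hr1, hr2⟩ := hrep a ha
        exact ⟨r, fun _ => ⟨hr1, hr2⟩⟩
      · exact ⟨a, fun h => absurd h ha⟩
    choose F hF using hrep'
    set fib : (Fin (n+1) → ℤ) → Finset (Fin (n+1) → ℤ) := fun r =>
      𝒜.filter fun a => F a = r with hfib
    have hcardsum : N = ∑ r ∈ R, (fib r).card :=
      Finset.card_eq_sum_card_fiberwise fun a ha => (hF a ha).1
    set Q := (𝒜 ×ˢ 𝒜).filter (fun ab => F ab.1 = F ab.2) with hQ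
    have hQcard : Q.card = ∑ r ∈ R, (fib r).card * (fib r).card := by
      rw [Finset.card_eq_sum_card_fiberwise
        (f := fun ab => F ab.1) (t := R) (fun ab hab => by
          rw [hQ] at hab
          simp only [Finset.mem_coe, Finset.mem_filter, Finset.mem_product] at hab
          exact (hF ab.1 hab.1.1).1)]
      refine Finset.sum_congr rfl fun r hr => ?_
      have : Q.filter (fun ab => F ab.1 = r) = (fib r) ×ˢ (fib r) := by
        ext ab
        simp only [hQ, hfib, Finset.mem_filter, Finset.mem_product]
        constructor
        · rintro ⟨⟨⟨h1, h2⟩, h3⟩, h4⟩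
          exact ⟨⟨h1, h4⟩, h2, h3 ▸ h4⟩
        · rintro ⟨⟨h1, h2⟩, h3, h4⟩
          exact ⟨⟨⟨h1, h3⟩, h2.trans h4.symm⟩, h2⟩
      rw [this, Finset.card_product]
    have hQsub : Q ⊆ pairs p := by
      intro ab hab
      rw [hQ] at hab
      simp only [Finset.mem_filter, Finset.mem_product] at hab
      obtain ⟨⟨h1, h2⟩, h3⟩ := hab
      rw [hpairs]
      simp only [Finset.mem_filter, Finset.mem_product]
      refine ⟨⟨h1, h2⟩, ?_⟩
      have hr1 := (hF ab.1 h1)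
      have hr2 := (hF ab.2 h2)
      exact aux_trans p (hJ p hp) ab.1 ab.2 (F ab.1)
        (hprim _ (hR𝒜 hr1.1)) hr1.2 (h3 ▸ hr2.2)
    -- Cauchy-Schwarz
    have hCS : ((N : ℝ)) ^ 2 ≤ (R.card : ℝ) * ∑ r ∈ R, ((fib r).card : ℝ) ^ 2 := by
      have h := sq_sum_le_card_mul_sum_sq (s := R) (f := fun r => ((fib r).card : ℝ))
      have hNc : (N : ℝ) = ∑ r ∈ R, ((fib r).card : ℝ) := by
        rw [hcardsum]; push_cast; rfl
      rw [hNc]; exact h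
    have hsum2 : ∑ r ∈ R, ((fib r).card : ℝ) ^ 2 = (Q.card : ℝ) := by
      rw [hQcard]
      push_cast
      exact Finset.sum_congr rfl fun r _ => (sq ((fib r).card : ℝ)).trans rfl
    have hkey : ((N : ℝ)) ^ 2 ≤ g p * ((pairs p).card : ℝ) := by
      calc ((N:ℝ))^2 ≤ (R.card : ℝ) * (Q.card : ℝ) := by rw [← hsum2]; exact hCS
      _ ≤ g p * ((pairs p).card : ℝ) := by
          apply mul_le_mul hRcard _ (Nat.cast_nonneg _) ((Nat.cast_nonneg _).trans hRcard)
          exact_mod_cast Finset.card_le_card hQsub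
    have hgp := hgpos p hp
    rw [mul_comm ((N:ℝ)^2), div_mul_eq_mul_div, div_le_iff₀ hgp]
    nlinarith [mul_le_mul_of_nonneg_left hkey (hlogp p hp)]
  -- upper bound for T
  have hTswap : T = ∑ ab ∈ 𝒜 ×ˢ 𝒜, ∑ p ∈ J,
      (if ∀ i j, (p : ℤ) ∣ ab.1 i * ab.2 j - ab.1 j * ab.2 i then Real.log p else 0) := by
    rw [hT, Finset.sum_comm]
    refine Finset.sum_congr rfl fun p _ => ?_
    simp only [hpairs]
    rw [← Finset.sum_filter, Finset.sum_const, nsmul_eq_mul, mul_comm]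
  have hupper : T ≤ (N : ℝ) * S1 + ((N : ℝ) * ((N : ℝ) - 1)) * L := by
    rw [hTswap, ← Finset.diag_union_offDiag 𝒜,
      Finset.sum_union (Finset.disjoint_diag_offDiag 𝒜)]
    have hdiag : ∑ ab ∈ 𝒜.diag, (∑ p ∈ J,
        (if ∀ i j, (p : ℤ) ∣ ab.1 i * ab.2 j - ab.1 j * ab.2 i then Real.log p else 0))
        ≤ (N : ℝ) * S1 := by
      have key := Finset.sum_le_card_nsmul 𝒜.diag
        (fun ab => ∑ p ∈ J,
          (if ∀ i j, (p : ℤ) ∣ ab.1 i * ab.2 j - ab.1 j * ab.2 i then Real.log p else 0))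
        S1 (fun ab _ => by
          rw [hS1]
          refine Finset.sum_le_sum fun p hp => ?_
          split_ifs
          · exact le_rfl
          · exact hlogp p hp)
      rw [Finset.diag_card, nsmul_eq_mul] at key
      exact key
    have hoff : ∑ ab ∈ 𝒜.offDiag, (∑ p ∈ J,
        (if ∀ i j, (p : ℤ) ∣ ab.1 i * ab.2 j - ab.1 j * ab.2 i then Real.log p else 0))
        ≤ ((N : ℝ) * ((N : ℝ) - 1)) * L := by
      have hbd : ∀ ab ∈ 𝒜.offDiag, (∑ p ∈ J,
          (if ∀ i j, (p : ℤ) ∣ ab.1 i * ab.2 j - ab.1 j * ab.2 i then Real.log p else 0)) ≤ L := by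
        intro ab hab
        rw [Finset.mem_offDiag] at hab
        obtain ⟨ha, hb, hne⟩ := hab
        obtain ⟨i, j, hij⟩ := hminor ab.1 ha ab.2 hb hne
        rw [← Finset.sum_filter]
        refine le_trans (aux_logsum
          (J.filter fun q => ∀ i j, (q : ℤ) ∣ ab.1 i * ab.2 j - ab.1 j * ab.2 i)
          (fun q hq => hJ q (Finset.mem_filter.mp hq).1)
          (ab.1 i * ab.2 j - ab.1 j * ab.2 i) hij
          (fun q hq => (Finset.mem_filter.mp hq).2 i j)) ?_
        rw [hLdef]
        have hpos : (0 : ℝ) < ((ab.1 i * ab.2 j - ab.1 j * ab.2 i).natAbs : ℝ) := by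
          exact_mod_cast Int.natAbs_pos.mpr hij
        apply Real.log_le_log hpos
        rw [Nat.cast_natAbs, Int.cast_abs]
        push_cast
        have h1 := hbound ab.1 ha i
        have h2 := hbound ab.2 hb j
        have h3 := hbound ab.1 ha j
        have h4 := hbound ab.2 hb i
        have e1 : |(ab.1 i : ℝ) * (ab.2 j : ℝ) - (ab.1 j : ℝ) * (ab.2 i : ℝ)| ≤
            |(ab.1 i : ℝ)| * |(ab.2 j : ℝ)| + |(ab.1 j : ℝ)| * |(ab.2 i : ℝ)| := by
          rw [← abs_mul, ← abs_mul]; exact abs_sub _ _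
        nlinarith [abs_nonneg ((ab.1 i : ℝ)), abs_nonneg ((ab.2 j : ℝ)),
          abs_nonneg ((ab.1 j : ℝ)), abs_nonneg ((ab.2 i : ℝ)), e1]
      have key := Finset.sum_le_card_nsmul 𝒜.offDiag
        (fun ab => ∑ p ∈ J,
          (if ∀ i j, (p : ℤ) ∣ ab.1 i * ab.2 j - ab.1 j * ab.2 i then Real.log p else 0))
        L hbd
      rw [Finset.offDiag_card, nsmul_eq_mul] at key
      refine key.trans ?_
      have hle : N ≤ N * N := Nat.le_mul_of_pos_left N (by omega)
      have hcast : ((N * N - N : ℕ) : ℝ) = (N : ℝ) * ((N : ℝ) - 1) := by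
        rw [Nat.cast_sub hle]; push_cast; ring
      rw [hcast]
    exact add_le_add hdiag hoff
  -- combine
  have hcomb : (N : ℝ) ^ 2 * S2 ≤ (N : ℝ) * S1 + ((N : ℝ) * ((N : ℝ) - 1)) * L :=
    hlow.trans hupper
  rw [le_div_iff₀ hden]
  nlinarith [hcomb, hNpos]
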